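/- Let n ≥ 1 and let γ = (γ_1,…,γ_n) : [0,n] → [0,1]^n be a set map. Then γ is a natural d-path — i.e. γ is continuous, each coordinate γᵢ is nondecreasing, γ(0) and γ(n) belong to {0,1}^n, and Σᵢ γᵢ(t) = t for all t ∈ [0,n] — if and only if γ is a quasi-isometry for the directed metrics \vec{d}_1, i.e. for all s ≤ t in [0,n], γ(s) ≤ γ(t) componentwise and Σᵢ (γᵢ(t) − γᵢ(s)) = t − s. -/

import Mathlib

/-- A map `γ : [0,n] → [0,1]^n` is a natural d-path if and only if it is a
quasi-isometry for the directed metrics `d⃗₁` (non-expansive and preserving all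
finite distances): for all `s ≤ t`, `γ(s) ≤ γ(t)` componentwise and
`Σᵢ (γᵢ(t) − γᵢ(s)) = t − s`. -/
theorem stmt12 (n : ℕ) (hn : 1 ≤ n)
    (γ : Set.Icc (0 : ℝ) (n : ℝ) → (Fin n → unitInterval)) :
    (Continuous γ ∧
     (∀ i : Fin n, Monotone (fun t => γ t i)) ∧
     (∀ i : Fin n,
        γ ⟨0, le_rfl, Nat.cast_nonneg n⟩ i = 0 ∨ γ ⟨0, le_rfl, Nat.cast_nonneg n⟩ i = 1) ∧
     (∀ i : Fin n,
        γ ⟨(n : ℝ), Nat.cast_nonneg n, le_rfl⟩ i = 0 ∨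
        γ ⟨(n : ℝ), Nat.cast_nonneg n, le_rfl⟩ i = 1) ∧
     (∀ t : Set.Icc (0 : ℝ) (n : ℝ), ∑ i, (γ t i : ℝ) = (t : ℝ)))
    ↔
    (∀ s t : Set.Icc (0 : ℝ) (n : ℝ), s ≤ t →
       γ s ≤ γ t ∧ ∑ i, ((γ t i : ℝ) - (γ s i : ℝ)) = (t : ℝ) - (s : ℝ)) := by
  constructor
  · rintro ⟨hc, hm, h0, hn', hs⟩ s t hst
    refine ⟨fun i => hm i hst, ?_⟩
    rw [Finset.sum_sub_distrib, hs t, hs s]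
  · intro H
    set z : Set.Icc (0 : ℝ) (n : ℝ) := ⟨0, le_rfl, Nat.cast_nonneg n⟩ with hzdef
    set e : Set.Icc (0 : ℝ) (n : ℝ) := ⟨(n : ℝ), Nat.cast_nonneg n, le_rfl⟩ with hedef
    have hze : z ≤ e := by
      show (0 : ℝ) ≤ (n : ℝ); exact Nat.cast_nonneg n
    have hsum_ne : ∑ i, ((γ e i : ℝ) - (γ z i : ℝ)) = (n : ℝ) := by
      have := (H z e hze).2
      simpa [hedef, hzdef] using this
    have hterm : ∀ i : Fin n, (γ e i : ℝ) - (γ z i : ℝ) = 1 := by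
      have hle : ∀ i ∈ Finset.univ, (γ e i : ℝ) - (γ z i : ℝ) ≤ 1 := by
        intro i _
        have h1 : (γ e i : ℝ) ≤ 1 := (γ e i).2.2
        have h2 : (0 : ℝ) ≤ (γ z i : ℝ) := (γ z i).2.1
        linarith
      have heq : ∑ i, ((γ e i : ℝ) - (γ z i : ℝ)) = ∑ _i : Fin n, (1 : ℝ) := by
        rw [hsum_ne]; simp
      intro i
      exact (Finset.sum_eq_sum_iff_of_le hle).mp heq i (Finset.mem_univ i)
    have h0 : ∀ i : Fin n, (γ z i : ℝ) = 0 := by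
      intro i
      have h1 : (γ e i : ℝ) ≤ 1 := (γ e i).2.2
      have h2 : (0 : ℝ) ≤ (γ z i : ℝ) := (γ z i).2.1
      have := hterm i
      linarith
    have h1 : ∀ i : Fin n, (γ e i : ℝ) = 1 := by
      intro i
      have := hterm i
      have := h0 i
      linarith
    have hsum : ∀ t : Set.Icc (0 : ℝ) (n : ℝ), ∑ i, (γ t i : ℝ) = (t : ℝ) := by
      intro t
      have hzt : z ≤ t := t.2.1
      have := (H z t hzt).2
      have hz0 : (z : ℝ) = 0 := rfl
      rw [Finset.sum_sub_distrib] at this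
      have hs0 : ∑ i, (γ z i : ℝ) = 0 := by
        simp [h0]
      rw [hs0, hz0] at this
      linarith
    have hmono : ∀ i : Fin n, Monotone (fun t => γ t i) :=
      fun i s t hst => (H s t hst).1 i
    have hlip : ∀ (i : Fin n) (s t : Set.Icc (0 : ℝ) (n : ℝ)),
        |(γ t i : ℝ) - (γ s i : ℝ)| ≤ |(t : ℝ) - (s : ℝ)| := by
      intro i s t
      rcases le_total s t with h | h
      · have hts : (s : ℝ) ≤ (t : ℝ) := h
        have hnn : (0 : ℝ) ≤ (γ t i : ℝ) - (γ s i : ℝ) :=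
          sub_nonneg.mpr (Subtype.coe_le_coe.mpr ((H s t h).1 i))
        have hub : (γ t i : ℝ) - (γ s i : ℝ) ≤ (t : ℝ) - (s : ℝ) := by
          have hsum' := (H s t h).2
          have key := Finset.single_le_sum
            (f := fun j => (γ t j : ℝ) - (γ s j : ℝ))
            (fun j _ => sub_nonneg.mpr (Subtype.coe_le_coe.mpr ((H s t h).1 j)))
            (Finset.mem_univ i)
          rw [hsum'] at key
          exact key
        rw [abs_of_nonneg hnn, abs_of_nonneg (by linarith)]
        exact hub
      · have hts : (t : ℝ) ≤ (s : ℝ) := h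
        have hnn : (0 : ℝ) ≤ (γ s i : ℝ) - (γ t i : ℝ) :=
          sub_nonneg.mpr (Subtype.coe_le_coe.mpr ((H t s h).1 i))
        have hub : (γ s i : ℝ) - (γ t i : ℝ) ≤ (s : ℝ) - (t : ℝ) := by
          have hsum' := (H t s h).2
          have key := Finset.single_le_sum
            (f := fun j => (γ s j : ℝ) - (γ t j : ℝ))
            (fun j _ => sub_nonneg.mpr (Subtype.coe_le_coe.mpr ((H t s h).1 j)))
            (Finset.mem_univ i)
          rw [hsum'] at key
          exact key
        rw [abs_sub_comm, abs_sub_comm (t : ℝ)]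
        rw [abs_of_nonneg hnn, abs_of_nonneg (by linarith)]
        exact hub
    have hcont : Continuous γ := by
      apply continuous_pi
      intro i
      apply continuous_induced_rng.2
      have : LipschitzWith 1 (fun t : Set.Icc (0 : ℝ) (n : ℝ) => (γ t i : ℝ)) := by
        apply LipschitzWith.of_dist_le_mul
        intro s t
        rw [Real.dist_eq, Subtype.dist_eq, Real.dist_eq]
        simpa using hlip i t s
      exact this.continuous
    refine ⟨hcont, hmono, ?_, ?_, hsum⟩
    · intro i
      left
      exact Subtype.ext (h0 i)
    · intro i
      right
      exact Subtype.ext (h1 i)
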